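/- Let f̄, ḡ be real numbers with f̄ ≠ ḡ, and let x ∈ (0,1]. Define the approximate global posterior expectation θ* = f̄ + (1/x)·(f̄ − ḡ), the minimal pivot θ_MP = f̄ + (f̄ − ḡ), and the neutral pivot θ_NP = f̄ + 2·(f̄ − ḡ). Then |θ* − θ_NP| ≤ |θ* − θ_MP| if and only if x ≤ 2/3. -/

import Mathlib

/-- The neutral pivot `f̄ + 2(f̄ - ḡ)` is at least as close as the minimal pivot
`f̄ + (f̄ - ḡ)` to the approximate global posterior expectation `f̄ + (1/x)(f̄ - ḡ)`
iff `x ≤ 2/3`. -/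
theorem neutral_vs_minimal_pivot (fbar gbar : ℝ) (hfg : fbar ≠ gbar)
    (x : ℝ) (hx : x ∈ Set.Ioc (0:ℝ) 1) :
    |(fbar + (1/x) * (fbar - gbar)) - (fbar + 2 * (fbar - gbar))|
        ≤ |(fbar + (1/x) * (fbar - gbar)) - (fbar + (fbar - gbar))|
      ↔ x ≤ 2/3 := by
  obtain ⟨hx0, hx1⟩ := hx
  have hd : fbar - gbar ≠ 0 := sub_ne_zero.mpr hfg
  have h1 : (fbar + (1/x) * (fbar - gbar)) - (fbar + 2 * (fbar - gbar))
      = (1/x - 2) * (fbar - gbar) := by ring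
  have h2 : (fbar + (1/x) * (fbar - gbar)) - (fbar + (fbar - gbar))
      = (1/x - 1) * (fbar - gbar) := by ring
  rw [h1, h2, abs_mul, abs_mul, mul_le_mul_iff_of_pos_right (abs_pos.mpr hd)]
  have hx1' : 1 ≤ 1/x := by rw [le_div_iff₀ hx0]; linarith
  rw [abs_of_nonneg (by linarith : (0:ℝ) ≤ 1/x - 1), abs_le]
  constructor
  · rintro ⟨hl, -⟩
    have h3 : 3/2 ≤ 1/x := by linarith
    rw [le_div_iff₀ hx0] at h3
    linarith
  · intro h
    have h3 : 3/2 ≤ 1/x := by rw [le_div_iff₀ hx0]; linarith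
    exact ⟨by linarith, by linarith⟩
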